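/- Let A_1 and A_2 be normal k×k complex matrices (k ≥ 1) such that the homogeneous polynomial Q(z_0, z_1, z_2) = det(z_0 I_k + z_1 A_1 + z_2 A_2) is a product of k linear forms in (z_0, z_1, z_2). Then A_1 and A_2 have a common eigenvector: there exist a nonzero v ∈ ℂ^k and scalars λ, μ ∈ ℂ with A_1 v = λ v and A_2 v = μ v. -/

import Mathlib

open Matrix Complex Finset

noncomputable def frob {n : ℕ} (M : Matrix (Fin n) (Fin n) ℂ) : ℝ :=
  ∑ i, ∑ j, Complex.normSq (M i j)

lemma frob_eq_trace {n : ℕ} (M : Matrix (Fin n) (Fin n) ℂ) :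
    ((frob M : ℂ)) = (M * Mᴴ).trace := by
  simp only [frob, trace, diag_apply, mul_apply, conjTranspose_apply]
  push_cast
  refine Finset.sum_congr rfl fun i _ => Finset.sum_congr rfl fun j _ => ?_
  rw [← Complex.mul_conj]
  rfl

lemma frob_conj {n : ℕ} (M U : Matrix (Fin n) (Fin n) ℂ) (hU : Uᴴ * U = 1) :
    frob (Uᴴ * M * U) = frob M := by
  have hU' : U * Uᴴ = 1 := mul_eq_one_comm.mp hU
  have : ((frob (Uᴴ * M * U) : ℂ)) = ((frob M : ℂ)) := by
    rw [frob_eq_trace, frob_eq_trace]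
    have h1 : (Uᴴ * M * U) * (Uᴴ * M * U)ᴴ = Uᴴ * (M * Mᴴ * U) := by
      simp only [conjTranspose_mul, conjTranspose_conjTranspose, Matrix.mul_assoc]
      rw [← Matrix.mul_assoc U, hU', Matrix.one_mul]
    rw [h1, Matrix.trace_mul_comm, Matrix.mul_assoc, hU', Matrix.mul_one]
  exact_mod_cast this

lemma tri_normal_diag : ∀ (n : ℕ) (T : Matrix (Fin n) (Fin n) ℂ),
    T.BlockTriangular (id : Fin n → Fin n) → Tᴴ * T = T * Tᴴ →
    ∀ i j, i ≠ j → T i j = 0 := by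
  intro n
  induction n with
  | zero => intro T _ _ i; exact i.elim0
  | succ n ih =>
    intro T htri hnorm i j hij
    -- first: row 0 off-diagonal vanishes
    have hcol0 : ∀ p : Fin n, T p.succ 0 = 0 := fun p =>
      htri (show (0:Fin (n+1)) < p.succ from p.succ_pos)
    have h00 : (Tᴴ * T) 0 0 = (T * Tᴴ) 0 0 := by rw [hnorm]
    have hL : (Tᴴ * T) 0 0 = (normSq (T 0 0) : ℂ) := by
      rw [mul_apply, Fin.sum_univ_succ]
      simp [conjTranspose_apply, hcol0, ← Complex.normSq_eq_conj_mul_self]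
    have hR : (T * Tᴴ) 0 0 = ∑ c, (normSq (T 0 c) : ℂ) := by
      rw [mul_apply]
      refine Finset.sum_congr rfl fun c _ => ?_
      rw [conjTranspose_apply, RCLike.star_def, Complex.mul_conj]
    have hrow0 : ∀ c : Fin n, T 0 c.succ = 0 := by
      have hsum : ∑ c, normSq (T 0 c) = normSq (T 0 0) := by
        have := hL ▸ hR ▸ h00
        exact_mod_cast this.symm
      have h0 : ∑ c ∈ univ.erase 0, normSq (T 0 c) = 0 := by
        have := Finset.add_sum_erase univ (fun c => normSq (T 0 c)) (mem_univ 0)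
        rw [← this] at hsum
        linarith
      intro c
      have hmem : c.succ ∈ univ.erase (0 : Fin (n+1)) := by
        simp [Fin.succ_ne_zero]
      have := (Finset.sum_eq_zero_iff_of_nonneg (fun x _ => normSq_nonneg _)).mp h0 c.succ hmem
      exact normSq_eq_zero.mp this
    -- the submatrix
    set T' : Matrix (Fin n) (Fin n) ℂ := T.submatrix Fin.succ Fin.succ with hT'
    have htri' : T'.BlockTriangular (id : Fin n → Fin n) := by
      intro a b hab
      exact htri (show (b.succ : Fin (n+1)) < a.succ by simpa using hab)
    have hnorm' : T'ᴴ * T' = T' * T'ᴴ := by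
      ext a b
      have h1 := congrFun (congrFun hnorm a.succ) b.succ
      have e1 : (Tᴴ * T) a.succ b.succ = (T'ᴴ * T') a b := by
        rw [mul_apply, mul_apply, Fin.sum_univ_succ]
        simp [conjTranspose_apply, hrow0, hT', submatrix_apply]
      have e2 : (T * Tᴴ) a.succ b.succ = (T' * T'ᴴ) a b := by
        rw [mul_apply, mul_apply, Fin.sum_univ_succ]
        simp [conjTranspose_apply, hcol0, hT', submatrix_apply]
      rw [← e1, ← e2, h1]
    -- conclude
    rcases Fin.eq_zero_or_eq_succ i with hi | ⟨i', rfl⟩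
    · subst hi
      rcases Fin.eq_zero_or_eq_succ j with hj | ⟨j', rfl⟩
      · exact absurd hj.symm hij
      · exact hrow0 j'
    · rcases Fin.eq_zero_or_eq_succ j with hj | ⟨j', rfl⟩
      · subst hj; exact hcol0 i'
      · exact ih T' htri' hnorm' i' j' (by simpa [Fin.succ_inj] using hij)

-- eigenvector existence
lemma exists_eigen {n : ℕ} (M : Matrix (Fin (n+1)) (Fin (n+1)) ℂ) :
    ∃ (lam : ℂ) (v : Fin (n+1) → ℂ), v ≠ 0 ∧ M.mulVec v = lam • v := by
  obtain ⟨lam, hlam⟩ := Module.End.exists_eigenvalue (M.mulVecLin)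
  obtain ⟨v, hv⟩ := hlam.exists_hasEigenvector
  exact ⟨lam, v, hv.2, hv.apply_eq_smul⟩

lemma schur_exists : ∀ (n : ℕ) (M : Matrix (Fin n) (Fin n) ℂ),
    ∃ U : Matrix (Fin n) (Fin n) ℂ, Uᴴ * U = 1 ∧
      (Uᴴ * M * U).BlockTriangular (id : Fin n → Fin n) := by
  intro n
  induction n with
  | zero =>
    intro M
    exact ⟨1, by simp, fun i j h => i.elim0⟩
  | succ n ih =>
    intro M
    obtain ⟨lam, v, hv0, hev⟩ := exists_eigen M
    -- normalize in EuclideanSpace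
    let E := EuclideanSpace ℂ (Fin (n+1))
    let v' : E := WithLp.toLp 2 v
    have hv0' : v' ≠ 0 := fun h => hv0 (by simpa [v'] using congrArg WithLp.ofLp h)
    let u : E := ‖v'‖⁻¹ • v'
    have hu1 : ‖u‖ = 1 := by
      rw [norm_smul, norm_inv, norm_norm, inv_mul_cancel₀ (norm_ne_zero_iff.mpr hv0')]
    have huev : M.mulVec u = lam • (u : Fin (n+1) → ℂ) := by
      show M.mulVec (‖v'‖⁻¹ • v) = lam • (‖v'‖⁻¹ • v)
      rw [mulVec_smul, hev, smul_comm]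
    -- orthonormal basis extending u
    have hcard : Module.finrank ℂ E = Fintype.card (Fin (n+1)) := by
      simp [E]
    have horth : Orthonormal ℂ (Set.restrict {(0 : Fin (n+1))} (fun _ : Fin (n+1) => u)) := by
      constructor
      · intro i; exact hu1
      · intro i j hij
        exfalso
        apply hij
        ext
        have hi := i.2; have hj := j.2
        simp only [Set.mem_singleton_iff] at hi hj
        rw [hi, hj]
    obtain ⟨b, hb⟩ := horth.exists_orthonormalBasis_extension_of_card_eq hcard
    have hb0 : b 0 = u := hb 0 rfl
    have hbo := b.orthonormal
    rw [orthonormal_iff_ite] at hbo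
    -- U₁ columns are the basis vectors
    let U₁ : Matrix (Fin (n+1)) (Fin (n+1)) ℂ := Matrix.of fun i j => b j i
    have hinner : ∀ a c : Fin (n+1), ∑ k, (starRingEnd ℂ) (b a k) * b c k = if a = c then 1 else 0 := by
      intro a c
      have := hbo a c
      rw [PiLp.inner_apply] at this
      simp [RCLike.inner_apply] at this
      rw [← this]
      exact Finset.sum_congr rfl fun _ _ => mul_comm _ _
    have hU₁ : U₁ᴴ * U₁ = 1 := by
      ext a c
      rw [mul_apply, one_apply]
      simp only [conjTranspose_apply, U₁, Matrix.of_apply, RCLike.star_def]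
      exact hinner a c
    -- N has zero first column below diagonal
    let N := U₁ᴴ * M * U₁
    have hcol : ∀ i : Fin (n+1), i ≠ 0 → N i 0 = 0 := by
      intro i hi
      show (U₁ᴴ * M * U₁) i 0 = 0
      rw [Matrix.mul_assoc, mul_apply]
      have : ∀ c, (M * U₁) c 0 = lam * b 0 c := by
        intro c
        rw [mul_apply]
        have : M.mulVec u c = lam * u c := by rw [huev]; rfl
        rw [← hb0] at this
        simpa [U₁, mulVec, dotProduct] using this
      calc ∑ c, U₁ᴴ i c * (M * U₁) c 0 = ∑ c, (starRingEnd ℂ) (b i c) * (lam * b 0 c) := by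
            refine Finset.sum_congr rfl fun c _ => ?_
            rw [this c, conjTranspose_apply]; rfl
        _ = lam * ∑ c, (starRingEnd ℂ) (b i c) * b 0 c := by
            rw [Finset.mul_sum]; refine Finset.sum_congr rfl fun c _ => by ring
        _ = 0 := by rw [hinner i 0, if_neg hi, mul_zero]
    -- inductive step on the submatrix
    obtain ⟨V, hV, hVtri⟩ := ih (N.submatrix Fin.succ Fin.succ)
    let A := N.submatrix Fin.succ Fin.succ
    -- W = 1 ⊕ V
    let W : Matrix (Fin (n+1)) (Fin (n+1)) ℂ := Matrix.of fun i j =>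
      Fin.cases (Fin.cases (1:ℂ) (fun _ => 0) j) (fun i' => Fin.cases 0 (fun j' => V i' j') j) i
    have hW00 : W 0 0 = 1 := rfl
    have hW0s : ∀ j : Fin n, W 0 j.succ = 0 := fun j => rfl
    have hWs0 : ∀ i : Fin n, W i.succ 0 = 0 := fun i => rfl
    have hWss : ∀ i j : Fin n, W i.succ j.succ = V i j := fun i j => rfl
    have hWW : Wᴴ * W = 1 := by
      ext a c
      rw [mul_apply, one_apply]
      rcases Fin.eq_zero_or_eq_succ a with rfl | ⟨a', rfl⟩ <;>
        rcases Fin.eq_zero_or_eq_succ c with rfl | ⟨c', rfl⟩ <;>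
          rw [Fin.sum_univ_succ] <;>
            simp only [conjTranspose_apply, hW00, hW0s, hWs0, hWss, star_zero, star_one,
              mul_zero, zero_mul, mul_one, one_mul, Finset.sum_const_zero, add_zero,
              zero_add]
      · simp
      · simp [(Fin.succ_ne_zero c').symm]
      · simp [Fin.succ_ne_zero a']
      · have := congrFun (congrFun hV a') c'
        rw [mul_apply, one_apply] at this
        simp only [conjTranspose_apply] at this
        rw [this]
        simp [Fin.succ_inj]
    refine ⟨U₁ * W, ?_, ?_⟩
    · rw [conjTranspose_mul, Matrix.mul_assoc, ← Matrix.mul_assoc U₁ᴴ, hU₁, Matrix.one_mul, hWW]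
    · have hre : (U₁ * W)ᴴ * M * (U₁ * W) = Wᴴ * N * W := by
        simp only [conjTranspose_mul, N, Matrix.mul_assoc]
      rw [hre]
      intro p q hlt
      simp only [id] at hlt
      -- p ≠ 0
      rcases Fin.eq_zero_or_eq_succ p with rfl | ⟨i, rfl⟩
      · exact absurd hlt (by simp)
      have hentry : ∀ d, (Wᴴ * N) i.succ d = ∑ c', star (V c' i) * N c'.succ d := by
        intro d
        rw [mul_apply, Fin.sum_univ_succ]
        simp only [conjTranspose_apply, hW0s, hWss, star_zero, zero_mul, zero_add]
      rcases Fin.eq_zero_or_eq_succ q with rfl | ⟨j, rfl⟩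
      · rw [mul_apply, Fin.sum_univ_succ]
        simp only [hW00, hWs0, mul_one, mul_zero, Finset.sum_const_zero, add_zero]
        rw [hentry 0]
        refine Finset.sum_eq_zero fun c' _ => ?_
        rw [hcol c'.succ (Fin.succ_ne_zero c'), mul_zero]
      · have hj : j < i := by simpa [Fin.succ_lt_succ_iff] using hlt
        have hT := hVtri (show (id j : Fin n) < id i from hj)
        have key : (Wᴴ * N * W) i.succ j.succ = (Vᴴ * (A * V)) i j := by
          calc (Wᴴ * N * W) i.succ j.succ
              = ∑ d, (Wᴴ * N) i.succ d * W d j.succ := mul_apply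
            _ = ∑ d', (Wᴴ * N) i.succ d'.succ * V d' j := by
                rw [Fin.sum_univ_succ, hW0s, mul_zero, zero_add]
                exact Finset.sum_congr rfl fun d' _ => by rw [hWss]
            _ = ∑ d', ∑ c', (star (V c' i) * N c'.succ d'.succ) * V d' j := by
                refine Finset.sum_congr rfl fun d' _ => ?_
                rw [hentry, Finset.sum_mul]
            _ = ∑ c', ∑ d', (star (V c' i) * N c'.succ d'.succ) * V d' j :=
                Finset.sum_comm
            _ = ∑ c', star (V c' i) * ∑ d', N c'.succ d'.succ * V d' j := by
                refine Finset.sum_congr rfl fun c' _ => ?_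
                rw [Finset.mul_sum]
                exact Finset.sum_congr rfl fun d' _ => by ring
            _ = ∑ c', Vᴴ i c' * (A * V) c' j := by
                refine Finset.sum_congr rfl fun c' _ => ?_
                rw [conjTranspose_apply, mul_apply]
                rfl
            _ = (Vᴴ * (A * V)) i j := (mul_apply).symm
        rw [key, ← Matrix.mul_assoc]
        exact hT

open Polynomial in
lemma schur_main {n : ℕ} (M : Matrix (Fin n) (Fin n) ℂ) (μ : Fin n → ℂ)
    (h : ∀ x : ℂ, (x • (1 : Matrix (Fin n) (Fin n) ℂ) - M).det = ∏ j, (x - μ j)) :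
    (∑ j, Complex.normSq (μ j)) ≤ frob M ∧
      ((Mᴴ * M = M * Mᴴ) ↔ frob M = ∑ j, Complex.normSq (μ j)) := by
  obtain ⟨U, hU, htri⟩ := schur_exists n M
  have hU' : U * Uᴴ = 1 := mul_eq_one_comm.mp hU
  set T := Uᴴ * M * U with hT
  have key : ∀ X Y : Matrix (Fin n) (Fin n) ℂ,
      (Uᴴ * X * U) * (Uᴴ * Y * U) = Uᴴ * (X * Y) * U := by
    intro X Y
    have h1 : (Uᴴ * X * U) * (Uᴴ * Y * U) = Uᴴ * X * (U * Uᴴ) * (Y * U) := by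
      simp only [Matrix.mul_assoc]
    rw [h1, hU', Matrix.mul_one]
    simp only [Matrix.mul_assoc]
  have key2 : ∀ X Y : Matrix (Fin n) (Fin n) ℂ,
      (U * X * Uᴴ) * (U * Y * Uᴴ) = U * (X * Y) * Uᴴ := by
    intro X Y
    have h1 : (U * X * Uᴴ) * (U * Y * Uᴴ) = U * X * (Uᴴ * U) * (Y * Uᴴ) := by
      simp only [Matrix.mul_assoc]
    rw [h1, hU, Matrix.mul_one]
    simp only [Matrix.mul_assoc]
  have hTH : Tᴴ = Uᴴ * Mᴴ * U := by
    rw [hT]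
    simp only [conjTranspose_mul, conjTranspose_conjTranspose, Matrix.mul_assoc]
  have hM : M = U * T * Uᴴ := by
    rw [hT]
    have : U * (Uᴴ * M * U) * Uᴴ = (U * Uᴴ) * M * (U * Uᴴ) := by
      simp only [Matrix.mul_assoc]
    rw [this, hU', Matrix.one_mul, Matrix.mul_one]
  -- det identity transfers to T
  have hdetT : ∀ x : ℂ, (x • (1 : Matrix (Fin n) (Fin n) ℂ) - T).det = ∏ j, (x - μ j) := by
    intro x
    have e : x • (1 : Matrix (Fin n) (Fin n) ℂ) - T = Uᴴ * (x • 1 - M) * U := by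
      rw [Matrix.mul_sub, Matrix.sub_mul, hT]
      congr 1
      rw [Matrix.mul_smul, Matrix.smul_mul, Matrix.mul_one, hU]
    rw [e, det_mul, det_mul]
    have e2 : Uᴴ.det * (x • (1 : Matrix (Fin n) (Fin n) ℂ) - M).det * U.det
        = (Uᴴ.det * U.det) * (x • (1 : Matrix (Fin n) (Fin n) ℂ) - M).det := by ring
    rw [e2, ← det_mul, hU, det_one, one_mul, h x]
  -- diag of T gives the same polynomial
  have hdiag : ∀ x : ℂ, (∏ i, (x - T i i)) = ∏ j, (x - μ j) := by
    intro x
    rw [← hdetT x]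
    have htri' : (x • (1 : Matrix (Fin n) (Fin n) ℂ) - T).BlockTriangular (id : Fin n → Fin n) := by
      intro i j hij
      have hne : i ≠ j := by
        intro hc
        rw [hc] at hij
        exact lt_irrefl _ hij
      simp [Matrix.sub_apply, Matrix.smul_apply, Matrix.one_apply_ne hne, htri hij]
    rw [Matrix.det_of_upperTriangular htri']
    refine (Finset.prod_congr rfl fun i _ => ?_).symm
    simp [Matrix.sub_apply, Matrix.smul_apply, Matrix.one_apply_eq]
  -- multiset equality of diagonal and μ
  have hms : Multiset.map (fun i => T i i) Finset.univ.val = Multiset.map μ Finset.univ.val := by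
    have hpoly : (∏ i, (X - C (T i i))) = ∏ j, (X - C (μ j)) := by
      apply Polynomial.funext
      intro x
      simp only [eval_prod, eval_sub, eval_X, eval_C]
      exact hdiag x
    have r1 := Polynomial.roots_multiset_prod_X_sub_C (Multiset.map (fun i => T i i) Finset.univ.val)
    have r2 := Polynomial.roots_multiset_prod_X_sub_C (Multiset.map μ Finset.univ.val)
    rw [← r1, ← r2]
    congr 1
    rw [Multiset.map_map, Multiset.map_map]
    calc (Multiset.map ((fun a => X - C a) ∘ fun i => T i i) Finset.univ.val).prod
        = ∏ i, (X - C (T i i)) := (Finset.prod_eq_multiset_prod _ _).symm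
      _ = ∏ j, (X - C (μ j)) := hpoly
      _ = (Multiset.map ((fun a => X - C a) ∘ μ) Finset.univ.val).prod :=
          Finset.prod_eq_multiset_prod _ _
  have hsum : ∑ i, Complex.normSq (T i i) = ∑ j, Complex.normSq (μ j) := by
    rw [Finset.sum_eq_multiset_sum, Finset.sum_eq_multiset_sum]
    rw [show Multiset.map (fun i => Complex.normSq (T i i)) Finset.univ.val
        = Multiset.map Complex.normSq (Multiset.map (fun i => T i i) Finset.univ.val) by
          rw [Multiset.map_map]; rfl,
      show Multiset.map (fun j => Complex.normSq (μ j)) Finset.univ.val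
        = Multiset.map Complex.normSq (Multiset.map μ Finset.univ.val) by
          rw [Multiset.map_map]; rfl,
      hms]
  have hfrobT : frob T = frob M := frob_conj M U hU
  have hdle : ∑ i, Complex.normSq (T i i) ≤ frob T := by
    refine Finset.sum_le_sum fun i _ => ?_
    exact Finset.single_le_sum (fun j _ => Complex.normSq_nonneg _) (Finset.mem_univ i)
  refine ⟨by rw [← hsum, ← hfrobT]; exact hdle, ?_, ?_⟩
  · -- normal → equality
    intro hnorm
    have hTnorm : Tᴴ * T = T * Tᴴ := by
      rw [hTH, hT, key, key, hnorm]
    have hdiagT := tri_normal_diag n T htri hTnorm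
    have : frob T = ∑ i, Complex.normSq (T i i) := by
      unfold frob
      refine Finset.sum_congr rfl fun i _ => ?_
      rw [Finset.sum_eq_single i (fun j _ hj => by rw [hdiagT i j (Ne.symm hj), Complex.normSq_zero])
        (fun hi => absurd (Finset.mem_univ i) hi)]
    rw [← hfrobT, this, hsum]
  · -- equality → normal
    intro heq
    have hTd : ∀ i j, i ≠ j → T i j = 0 := by
      have h0 : ∑ i, (∑ j, Complex.normSq (T i j) - Complex.normSq (T i i)) = 0 := by
        have hft : frob T = ∑ i, Complex.normSq (T i i) := by rw [hfrobT, heq, hsum]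
        unfold frob at hft
        rw [Finset.sum_sub_distrib, hft, sub_self]
      have hnn : ∀ i ∈ Finset.univ, 0 ≤ ∑ j, Complex.normSq (T i j) - Complex.normSq (T i i) :=
        fun i _ => sub_nonneg.mpr (Finset.single_le_sum
          (fun j _ => Complex.normSq_nonneg _) (Finset.mem_univ i))
      intro i j hij
      have hrow := (Finset.sum_eq_zero_iff_of_nonneg hnn).mp h0 i (Finset.mem_univ i)
      have hrow2 : ∑ j ∈ Finset.univ.erase i, Complex.normSq (T i j) = 0 := by
        have hadd := Finset.add_sum_erase Finset.univ (fun j => Complex.normSq (T i j))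
          (Finset.mem_univ i)
        rw [sub_eq_zero] at hrow
        rw [← hadd] at hrow
        linarith
      have := (Finset.sum_eq_zero_iff_of_nonneg
        (fun j _ => Complex.normSq_nonneg _)).mp hrow2 j
        (Finset.mem_erase.mpr ⟨Ne.symm hij, Finset.mem_univ j⟩)
      exact Complex.normSq_eq_zero.mp this
    have hTnorm : Tᴴ * T = T * Tᴴ := by
      have hTdg : T = Matrix.diagonal (fun i => T i i) := by
        ext i j
        by_cases hij : i = j
        · subst hij; simp
        · rw [hTd i j hij, Matrix.diagonal_apply_ne _ hij]
      rw [hTdg, diagonal_conjTranspose, diagonal_mul_diagonal, diagonal_mul_diagonal]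
      congr 1
      funext i
      simp [mul_comm]
    have hMH : Mᴴ = U * Tᴴ * Uᴴ := by
      rw [hM]
      simp only [conjTranspose_mul, conjTranspose_conjTranspose, Matrix.mul_assoc]
    calc Mᴴ * M = U * (Tᴴ * T) * Uᴴ := by rw [hMH]; nth_rewrite 1 [hM]; rw [key2]
      _ = U * (T * Tᴴ) * Uᴴ := by rw [hTnorm]
      _ = M * Mᴴ := by rw [← key2, ← hM, ← hMH]

/-- If `A₁, A₂` are normal `k×k` matrices (`k ≥ 1`) whose joint characteristic polynomial
`Q(z) = det(z₀I + z₁A₁ + z₂A₂)` is a product of `k` linear forms, then `A₁` and `A₂` have a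
common eigenvector. -/
theorem stmt5 (k : ℕ) (hk : 0 < k) (A₁ A₂ : Matrix (Fin k) (Fin k) ℂ)
    (h₁ : A₁ᴴ * A₁ = A₁ * A₁ᴴ) (h₂ : A₂ᴴ * A₂ = A₂ * A₂ᴴ)
    (w : Fin k → Fin 3 → ℂ)
    (hQ : ∀ z₀ z₁ z₂ : ℂ,
      (z₀ • (1 : Matrix (Fin k) (Fin k) ℂ) + z₁ • A₁ + z₂ • A₂).det =
        ∏ j, (w j 0 * z₀ + w j 1 * z₁ + w j 2 * z₂)) :
    ∃ (v : Fin k → ℂ) (l μ : ℂ), v ≠ 0 ∧ A₁.mulVec v = l • v ∧ A₂.mulVec v = μ • v := by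
  -- Step 1 : the leading coefficients multiply to 1, hence are nonzero
  have hprod : ∏ j, w j 0 = 1 := by
    have h := hQ 1 0 0
    simp only [one_smul, zero_smul, add_zero, det_one, mul_one, mul_zero] at h
    simpa using h.symm
  have hw0 : ∀ j, w j 0 ≠ 0 := by
    intro j h0
    have hz := Finset.prod_eq_zero (f := fun j => w j 0) (Finset.mem_univ j) h0
    rw [hprod] at hz
    exact one_ne_zero hz
  set a : Fin k → ℂ := fun j => w j 1 / w j 0 with ha
  set bb : Fin k → ℂ := fun j => w j 2 / w j 0 with hbb
  -- Step 2 : eigenvalue identities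
  have hkey : ∀ z x : ℂ, (x • (1 : Matrix (Fin k) (Fin k) ℂ) - (A₁ + z • A₂)).det
      = ∏ j, (x - (a j + z * bb j)) := by
    intro z x
    have e : x • (1 : Matrix (Fin k) (Fin k) ℂ) - (A₁ + z • A₂)
        = x • 1 + (-1 : ℂ) • A₁ + (-z) • A₂ := by
      simp only [neg_smul, one_smul]
      abel
    rw [e, hQ x (-1) (-z)]
    have e2 : ∀ j : Fin k, w j 0 * x + w j 1 * (-1) + w j 2 * (-z)
        = w j 0 * (x - (a j + z * bb j)) := by
      intro j
      simp only [ha, hbb]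
      field_simp [hw0 j]
      ring
    rw [Finset.prod_congr rfl (fun j _ => e2 j), Finset.prod_mul_distrib, hprod, one_mul]
  have hkey1 : ∀ x : ℂ, (x • (1 : Matrix (Fin k) (Fin k) ℂ) - A₁).det = ∏ j, (x - a j) := by
    intro x
    have := hkey 0 x
    simpa using this
  have hkey2 : ∀ x : ℂ, (x • (1 : Matrix (Fin k) (Fin k) ℂ) - A₂).det = ∏ j, (x - bb j) := by
    intro x
    have e : x • (1 : Matrix (Fin k) (Fin k) ℂ) - A₂ = x • 1 + (0:ℂ) • A₁ + (-1 : ℂ) • A₂ := by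
      simp only [neg_smul, one_smul, zero_smul]
      abel
    rw [e, hQ x 0 (-1)]
    have e2 : ∀ j : Fin k, w j 0 * x + w j 1 * 0 + w j 2 * (-1)
        = w j 0 * (x - bb j) := by
      intro j
      simp only [hbb]
      field_simp [hw0 j]
      ring
    rw [Finset.prod_congr rfl (fun j _ => e2 j), Finset.prod_mul_distrib, hprod, one_mul]
  -- Step 3 : Frobenius norm identities; all A₁ + z A₂ are normal
  have SA1 : frob A₁ = ∑ j, Complex.normSq (a j) := (schur_main A₁ a hkey1).2.mp h₁
  have SA2 : frob A₂ = ∑ j, Complex.normSq (bb j) := (schur_main A₂ bb hkey2).2.mp h₂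
  set c : ℂ := ∑ i, ∑ j, A₁ i j * (starRingEnd ℂ) (A₂ i j) with hc
  set ee : ℂ := ∑ j, a j * (starRingEnd ℂ) (bb j) with hee
  have hptwise : ∀ z p q : ℂ, Complex.normSq (p + z * q)
      = Complex.normSq p + Complex.normSq z * Complex.normSq q
        + 2 * ((starRingEnd ℂ) z * (p * (starRingEnd ℂ) q)).re := by
    intro z p q
    rw [Complex.normSq_add, Complex.normSq_mul]
    have hre : p * (starRingEnd ℂ) (z * q) = (starRingEnd ℂ) z * (p * (starRingEnd ℂ) q) := by
      rw [_root_.map_mul]; ring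
    rw [hre]
  have hf : ∀ z : ℂ, frob (A₁ + z • A₂)
      = frob A₁ + Complex.normSq z * frob A₂ + 2 * ((starRingEnd ℂ) z * c).re := by
    intro z
    unfold frob
    calc ∑ i, ∑ j, Complex.normSq ((A₁ + z • A₂) i j)
        = ∑ i, ∑ j, (Complex.normSq (A₁ i j) + Complex.normSq z * Complex.normSq (A₂ i j)
            + 2 * ((starRingEnd ℂ) z * (A₁ i j * (starRingEnd ℂ) (A₂ i j))).re) := by
          refine Finset.sum_congr rfl fun i _ => Finset.sum_congr rfl fun j _ => ?_
          rw [Matrix.add_apply, Matrix.smul_apply, smul_eq_mul, hptwise]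
      _ = _ := by
          rw [hc]
          simp only [Finset.sum_add_distrib, Finset.mul_sum, Complex.re_sum, mul_comm]
  have hg : ∀ z : ℂ, (∑ j, Complex.normSq (a j + z * bb j))
      = (∑ j, Complex.normSq (a j)) + Complex.normSq z * (∑ j, Complex.normSq (bb j))
        + 2 * ((starRingEnd ℂ) z * ee).re := by
    intro z
    calc ∑ j, Complex.normSq (a j + z * bb j)
        = ∑ j, (Complex.normSq (a j) + Complex.normSq z * Complex.normSq (bb j)
            + 2 * ((starRingEnd ℂ) z * (a j * (starRingEnd ℂ) (bb j))).re) := by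
          exact Finset.sum_congr rfl fun j _ => hptwise z (a j) (bb j)
      _ = _ := by
          rw [hee]
          simp only [Finset.sum_add_distrib, Finset.mul_sum, Complex.re_sum, mul_comm]
  -- the inequality forces c = ee
  have hce : c = ee := by
    have hineq : ∀ z : ℂ, 0 ≤ ((starRingEnd ℂ) z * (c - ee)).re := by
      intro z
      have h5 := (schur_main (A₁ + z • A₂) (fun j => a j + z * bb j) (hkey z)).1
      rw [hf z, hg z] at h5
      rw [SA1, SA2] at h5
      have : 2 * ((starRingEnd ℂ) z * ee).re ≤ 2 * ((starRingEnd ℂ) z * c).re := by linarith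
      have h6 : ((starRingEnd ℂ) z * ee).re ≤ ((starRingEnd ℂ) z * c).re := by linarith
      rw [mul_sub, Complex.sub_re]
      linarith
    have h7 := hineq (-(c - ee))
    rw [map_neg, neg_mul, mul_comm, Complex.mul_conj, Complex.neg_re, Complex.ofReal_re] at h7
    have h8 : Complex.normSq (c - ee) = 0 := le_antisymm (by linarith) (Complex.normSq_nonneg _)
    have := Complex.normSq_eq_zero.mp h8
    rw [sub_eq_zero] at this
    exact this
  -- all A₁ + z A₂ are normal
  have hnormal : ∀ z : ℂ, (A₁ + z • A₂)ᴴ * (A₁ + z • A₂) = (A₁ + z • A₂) * (A₁ + z • A₂)ᴴ := by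
    intro z
    refine (schur_main (A₁ + z • A₂) (fun j => a j + z * bb j) (hkey z)).2.mpr ?_
    rw [hf z, hg z, SA1, SA2, hce]
  -- extract the two commutation relations
  have hn1 := hnormal 1
  have hnI := hnormal Complex.I
  simp only [one_smul] at hn1
  have R1 : A₁ᴴ * A₂ = A₂ * A₁ᴴ := by
    ext i j
    have e1 := congrFun (congrFun hn1 i) j
    have e2 := congrFun (congrFun hnI i) j
    have e3 := congrFun (congrFun h₁ i) j
    have e4 := congrFun (congrFun h₂ i) j
    simp only [conjTranspose_add, conjTranspose_smul, Complex.star_def, Complex.conj_I,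
      Matrix.add_mul, Matrix.mul_add, neg_smul, Matrix.neg_mul, Matrix.mul_neg,
      Matrix.smul_mul, Matrix.mul_smul, smul_smul,
      Matrix.add_apply, Matrix.neg_apply, Matrix.smul_apply, smul_eq_mul] at e1 e2
    linear_combination (e1 - e3 - e4) / 2 - Complex.I * (e2 - e3 - e4) / 2
      + Complex.I_sq * (((A₁ᴴ * A₂) i j - (A₂ * A₁ᴴ) i j + (A₁ * A₂ᴴ) i j
          + Complex.I * (A₂ * A₂ᴴ) i j - Complex.I * (A₂ᴴ * A₂) i j - (A₂ᴴ * A₁) i j) / 2)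
  have R2 : A₂ᴴ * A₁ = A₁ * A₂ᴴ := by
    ext i j
    have e1 := congrFun (congrFun hn1 i) j
    have e2 := congrFun (congrFun hnI i) j
    have e3 := congrFun (congrFun h₁ i) j
    have e4 := congrFun (congrFun h₂ i) j
    simp only [conjTranspose_add, conjTranspose_smul, Complex.star_def, Complex.conj_I,
      Matrix.add_mul, Matrix.mul_add, neg_smul, Matrix.neg_mul, Matrix.mul_neg,
      Matrix.smul_mul, Matrix.mul_smul, smul_smul,
      Matrix.add_apply, Matrix.neg_apply, Matrix.smul_apply, smul_eq_mul] at e1 e2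
    linear_combination (e1 - e3 - e4) / 2 + Complex.I * (e2 - e3 - e4) / 2
      + Complex.I_sq * (((A₂ᴴ * A₁) i j + (A₂ * A₁ᴴ) i j - (A₁ * A₂ᴴ) i j
          - Complex.I * (A₂ * A₂ᴴ) i j + Complex.I * (A₂ᴴ * A₂) i j - (A₁ᴴ * A₂) i j) / 2)
  -- the trace trick: A₁ and A₂ commute
  have hcomm : A₁ * A₂ = A₂ * A₁ := by
    set D := A₁ * A₂ - A₂ * A₁ with hD
    have t1 : ((A₁ * A₂) * (A₂ᴴ * A₁ᴴ)).trace = ((A₁ * A₁ᴴ) * (A₂ * A₂ᴴ)).trace := by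
      calc ((A₁ * A₂) * (A₂ᴴ * A₁ᴴ)).trace
          = ((A₂ * (A₂ᴴ * A₁ᴴ)) * A₁).trace := by
            rw [Matrix.mul_assoc, Matrix.trace_mul_comm]
        _ = (A₂ * (A₂ᴴ * (A₁ᴴ * A₁))).trace := by simp only [Matrix.mul_assoc]
        _ = (A₂ * (A₂ᴴ * (A₁ * A₁ᴴ))).trace := by rw [h₁]
        _ = ((A₁ * A₁ᴴ) * (A₂ * A₂ᴴ)).trace := by
            rw [← Matrix.mul_assoc, Matrix.trace_mul_comm]
    have t2 : ((A₁ * A₂) * (A₁ᴴ * A₂ᴴ)).trace = ((A₁ * A₁ᴴ) * (A₂ * A₂ᴴ)).trace := by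
      calc ((A₁ * A₂) * (A₁ᴴ * A₂ᴴ)).trace
          = (A₁ * (A₂ * A₁ᴴ * A₂ᴴ)).trace := by simp only [Matrix.mul_assoc]
        _ = (A₁ * (A₁ᴴ * A₂ * A₂ᴴ)).trace := by rw [← R1]
        _ = ((A₁ * A₁ᴴ) * (A₂ * A₂ᴴ)).trace := by simp only [Matrix.mul_assoc]
    have t3 : ((A₂ * A₁) * (A₂ᴴ * A₁ᴴ)).trace = ((A₁ * A₁ᴴ) * (A₂ * A₂ᴴ)).trace := by
      calc ((A₂ * A₁) * (A₂ᴴ * A₁ᴴ)).trace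
          = (A₂ * (A₁ * A₂ᴴ * A₁ᴴ)).trace := by simp only [Matrix.mul_assoc]
        _ = (A₂ * (A₂ᴴ * A₁ * A₁ᴴ)).trace := by rw [← R2]
        _ = ((A₂ * A₂ᴴ) * (A₁ * A₁ᴴ)).trace := by simp only [Matrix.mul_assoc]
        _ = ((A₁ * A₁ᴴ) * (A₂ * A₂ᴴ)).trace := Matrix.trace_mul_comm _ _
    have t4 : ((A₂ * A₁) * (A₁ᴴ * A₂ᴴ)).trace = ((A₁ * A₁ᴴ) * (A₂ * A₂ᴴ)).trace := by
      calc ((A₂ * A₁) * (A₁ᴴ * A₂ᴴ)).trace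
          = ((A₁ * (A₁ᴴ * A₂ᴴ)) * A₂).trace := by
            rw [Matrix.mul_assoc, Matrix.trace_mul_comm]
        _ = (A₁ * (A₁ᴴ * (A₂ᴴ * A₂))).trace := by simp only [Matrix.mul_assoc]
        _ = (A₁ * (A₁ᴴ * (A₂ * A₂ᴴ))).trace := by rw [h₂]
        _ = ((A₁ * A₁ᴴ) * (A₂ * A₂ᴴ)).trace := by simp only [Matrix.mul_assoc]
    have htr : (D * Dᴴ).trace = 0 := by
      have hDH : Dᴴ = A₂ᴴ * A₁ᴴ - A₁ᴴ * A₂ᴴ := by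
        rw [hD]
        simp only [conjTranspose_sub, conjTranspose_mul]
      rw [hD, hDH, Matrix.sub_mul, Matrix.mul_sub, Matrix.mul_sub, Matrix.trace_sub,
        Matrix.trace_sub, Matrix.trace_sub, t1, t2, t3, t4]
      ring
    have hfD : (frob D : ℂ) = 0 := by rw [frob_eq_trace, htr]
    have hfD' : frob D = 0 := by exact_mod_cast hfD
    have hDij : ∀ i j, D i j = 0 := by
      intro i j
      unfold frob at hfD'
      have h5 := (Finset.sum_eq_zero_iff_of_nonneg
        (fun i _ => Finset.sum_nonneg fun j _ => Complex.normSq_nonneg _)).mp hfD' i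
        (Finset.mem_univ i)
      have h6 := (Finset.sum_eq_zero_iff_of_nonneg
        (fun j _ => Complex.normSq_nonneg _)).mp h5 j (Finset.mem_univ j)
      exact Complex.normSq_eq_zero.mp h6
    have : D = 0 := by
      ext i j
      exact hDij i j
    rw [hD] at this
    rw [sub_eq_zero] at this
    exact this
  -- commuting matrices have a common eigenvector
  haveI : Nonempty (Fin k) := ⟨⟨0, hk⟩⟩
  obtain ⟨lam, hlam⟩ := Module.End.exists_eigenvalue (A₁.mulVecLin)
  obtain ⟨v₀, hv₀⟩ := hlam.exists_hasEigenvector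
  set E := Module.End.eigenspace (A₁.mulVecLin) lam with hE
  have hInv : ∀ x ∈ E, A₂.mulVecLin x ∈ E := by
    intro x hx
    rw [hE, Module.End.mem_eigenspace_iff] at hx ⊢
    have : A₁.mulVecLin (A₂.mulVecLin x) = A₂.mulVecLin (A₁.mulVecLin x) := by
      show A₁.mulVec (A₂.mulVec x) = A₂.mulVec (A₁.mulVec x)
      rw [Matrix.mulVec_mulVec, Matrix.mulVec_mulVec, hcomm]
    rw [this, hx]
    exact LinearMap.map_smul _ _ _
  let g' : E →ₗ[ℂ] E := (A₂.mulVecLin).restrict hInv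
  haveI : Nontrivial E := nontrivial_of_ne ⟨v₀, hv₀.1⟩ 0 (fun hc =>
    hv₀.2 ((Submodule.mk_eq_zero _ _).mp hc))
  obtain ⟨mu, hmu⟩ := Module.End.exists_eigenvalue (g' : Module.End ℂ E)
  obtain ⟨ww, hww⟩ := hmu.exists_hasEigenvector
  refine ⟨(ww : Fin k → ℂ), lam, mu, ?_, ?_, ?_⟩
  · intro hc
    exact hww.2 (Subtype.ext hc)
  · exact Module.End.mem_eigenspace_iff.mp ww.2
  · have := hww.apply_eq_smul
    have h7 : (g' ww : Fin k → ℂ) = A₂.mulVec (ww : Fin k → ℂ) := by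
      rw [LinearMap.restrict_coe_apply]
      rfl
    have h8 : ((mu • ww : E) : Fin k → ℂ) = mu • (ww : Fin k → ℂ) := rfl
    rw [← h7, this, h8]
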